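/- Let T ≥ 1 be an integer and α ∈ [0,1). Suppose that for every g > 0 we are given a measurable space H_g with probability measures P₁^g, P₂^g, a measurable map N₁^g : H_g → ℕ with N₁^g ≤ T, losses R₁^g = g·(T − N₁^g) and R₂^g = g·N₁^g, and D_H²(P₁^g‖P₂^g) ≤ g²T/2. Then sup_{g > 0} inf_{t ∈ ℝ} { t + (1/(1−α))·(½∫(R₁^g−t)₊ dP₁^g + ½∫(R₂^g−t)₊ dP₂^g) } ≥ c_α·√T, where c_α = 2/(27(1−α)) for 0 ≤ α ≤ 1/3 and c_α = √α/(3√3) for 1/3 ≤ α < 1. -/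

import Mathlib

open MeasureTheory

/-- Squared Hellinger divergence, computed with the dominating measure `P + Q`. -/
noncomputable def sqHellinger {X : Type*} [MeasurableSpace X] (P Q : Measure X) : ℝ :=
  1 - ∫ x, Real.sqrt ((P.rnDeriv (P + Q) x).toReal * (Q.rnDeriv (P + Q) x).toReal) ∂(P + Q)

/-- The optimized constant `c_α`. -/
noncomputable def cAlpha (α : ℝ) : ℝ :=
  if α ≤ 1 / 3 then 2 / (27 * (1 - α)) else Real.sqrt α / (3 * Real.sqrt 3)

private theorem core {X : Type*} [MeasurableSpace X] (P Q : Measure X)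
    [IsProbabilityMeasure P] [IsProbabilityMeasure Q]
    (Hsq : ℝ)
    (hHdef : Hsq = 1 - ∫ x, Real.sqrt ((P.rnDeriv (P + Q) x).toReal * (Q.rnDeriv (P + Q) x).toReal) ∂(P + Q))
    (c : ℝ) (hc0 : 0 < c) (hH : Hsq ≤ c ^ 2 / 2)
    (ψ₁ ψ₂ : X → ℝ) (hψ₁ : Measurable ψ₁) (hψ₂ : Measurable ψ₂)
    (M : ℝ) (hψ₁0 : ∀ x, 0 ≤ ψ₁ x) (hψ₂0 : ∀ x, 0 ≤ ψ₂ x)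
    (hψ₁M : ∀ x, ψ₁ x ≤ M) (hψ₂M : ∀ x, ψ₂ x ≤ M)
    (d : ℝ) (hd0 : 0 ≤ d) (hd : ∀ x, d ≤ ψ₁ x + ψ₂ x) :
    (1 - c) * d ≤ (∫ x, ψ₁ x ∂P) + ∫ x, ψ₂ x ∂Q := by
  set μ : Measure X := P + Q with hμ
  have hPμ : P ≪ μ := Measure.AbsolutelyContinuous.add_right .rfl Q
  have hQμ : Q ≪ μ := by rw [hμ, add_comm]; exact Measure.AbsolutelyContinuous.add_right .rfl P
  have hμuniv : μ Set.univ = 2 := by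
    simp [hμ, Measure.add_apply]
    norm_num
  have hμfin : IsFiniteMeasure μ := by
    constructor; rw [hμuniv]; exact ENNReal.ofNat_lt_top
  have hμuniv' : (μ Set.univ).toReal = 2 := by rw [hμuniv]; simp
  set p : X → ℝ := fun x => (P.rnDeriv μ x).toReal with hp
  set q : X → ℝ := fun x => (Q.rnDeriv μ x).toReal with hq
  have hpm : Measurable p := (Measure.measurable_rnDeriv P μ).ennreal_toReal
  have hqm : Measurable q := (Measure.measurable_rnDeriv Q μ).ennreal_toReal
  have hp0 : ∀ x, 0 ≤ p x := fun x => ENNReal.toReal_nonneg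
  have hq0 : ∀ x, 0 ≤ q x := fun x => ENNReal.toReal_nonneg
  -- a.e. p + q = 1
  have hpq1 : ∀ᵐ x ∂μ, p x + q x = 1 := by
    have h1 : (P + Q).rnDeriv μ =ᵐ[μ] fun _ => 1 := by rw [hμ]; exact Measure.rnDeriv_self μ
    have h2 : (P + Q).rnDeriv μ =ᵐ[μ] P.rnDeriv μ + Q.rnDeriv μ := Measure.rnDeriv_add P Q μ
    have h3 := Measure.rnDeriv_lt_top P μ
    have h4 := Measure.rnDeriv_lt_top Q μ
    filter_upwards [h1, h2, h3, h4] with x e1 e2 l3 l4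
    simp only [Pi.add_apply] at e2
    have h5 : P.rnDeriv μ x + Q.rnDeriv μ x = 1 := by rw [← e2, e1]
    have h6 := congrArg ENNReal.toReal h5
    rwa [ENNReal.toReal_add l3.ne l4.ne, ENNReal.toReal_one] at h6
  -- integrability helper
  have hint : ∀ (f : X → ℝ) (C : ℝ), Measurable f → (∀ᵐ x ∂μ, ‖f x‖ ≤ C) → Integrable f μ :=
    fun f C hf hb => Integrable.mono' (integrable_const C) hf.aestronglyMeasurable hb
  set u : X → ℝ := fun x => |p x - 1/2| with hu
  have hum : Measurable u := (hpm.sub measurable_const).abs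
  have hu0 : ∀ x, 0 ≤ u x := fun x => abs_nonneg _
  have huhalf : ∀ᵐ x ∂μ, u x ≤ 1/2 := by
    filter_upwards [hpq1] with x e
    have := hp0 x; have := hq0 x
    rw [hu]; simp only []
    rcases abs_cases (p x - 1/2) with ⟨h, _⟩ | ⟨h, _⟩ <;> rw [h] <;> linarith
  have hintu : Integrable u μ := by
    refine hint u 1 hum ?_
    filter_upwards [huhalf] with x e
    rw [Real.norm_eq_abs, abs_of_nonneg (hu0 x)]; linarith
  have hintu2 : Integrable (fun x => u x ^ 2) μ := by
    refine hint _ 1 (hum.pow measurable_const) ?_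
    filter_upwards [huhalf] with x e
    rw [Real.norm_eq_abs, abs_of_nonneg (sq_nonneg _)]
    nlinarith [hu0 x]
  have hsqrtm : Measurable (fun x => Real.sqrt (p x * q x)) := (hpm.mul hqm).sqrt
  have hintsqrt : Integrable (fun x => Real.sqrt (p x * q x)) μ := by
    refine hint _ 1 hsqrtm ?_
    filter_upwards [hpq1] with x e
    rw [Real.norm_eq_abs, abs_of_nonneg (Real.sqrt_nonneg _)]
    rw [show (1:ℝ) = Real.sqrt 1 by simp]
    apply Real.sqrt_le_sqrt
    nlinarith [hp0 x, hq0 x]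
  -- ∫ sqrt(pq) = 1 - Hsq
  have hsqint : ∫ x, Real.sqrt (p x * q x) ∂μ = 1 - Hsq := by rw [hHdef]; ring
  -- ∫ u^2 ≤ Hsq
  have hu2le : ∫ x, u x ^ 2 ∂μ ≤ Hsq := by
    have hle : (fun x => u x ^ 2) ≤ᵐ[μ] (fun x => 1/2 - Real.sqrt (p x * q x)) := by
      filter_upwards [hpq1] with x e
      have hq' : q x = 1 - p x := by linarith
      have hu2 : u x ^ 2 = (p x - 1/2)^2 := sq_abs _
      have hpq' : p x * q x = 1/4 - (p x - 1/2)^2 := by rw [hq']; ring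
      have h1 : Real.sqrt (p x * q x) ≤ 1/2 - (p x - 1/2)^2 := by
        have hnn : 0 ≤ p x * q x := mul_nonneg (hp0 x) (hq0 x)
        have hs := Real.sq_sqrt hnn
        have hsn := Real.sqrt_nonneg (p x * q x)
        nlinarith [sq_nonneg ((p x - 1/2)^2)]
      linarith [hu2, h1]
    have step := integral_mono_ae hintu2 ((integrable_const (1/2 : ℝ)).sub hintsqrt) hle
    simp only [Pi.sub_apply] at step
    rw [integral_sub (integrable_const _) hintsqrt, integral_const, measureReal_def, hμuniv', hsqint] at step
    simp only [smul_eq_mul] at step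
    linarith
  -- ∫ u ≤ c
  have hule : ∫ x, u x ∂μ ≤ c := by
    have hle : u ≤ᵐ[μ] (fun x => u x ^ 2 / c + c/4) := by
      filter_upwards with x
      have h := sq_nonneg (u x - c/2)
      have : 0 ≤ (u x - c/2)^2 / c := div_nonneg h hc0.le
      have heq : (u x - c/2)^2 / c = u x ^2 / c + c/4 - u x := by field_simp; ring
      linarith [heq ▸ this]
    have step := integral_mono_ae hintu ((hintu2.div_const c).add (integrable_const _)) hle
    simp only [Pi.add_apply] at step
    rw [integral_add (hintu2.div_const c) (integrable_const _), integral_const, measureReal_def, hμuniv',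
      integral_div] at step
    simp only [smul_eq_mul] at step
    have h2 : ∫ x, u x ^ 2 ∂μ ≤ c^2/2 := le_trans hu2le hH
    have h3 : (∫ x, u x ^ 2 ∂μ) / c ≤ (c^2/2) / c := by
      apply div_le_div_of_nonneg_right h2 hc0.le
    have h4 : (c^2/2)/c = c/2 := by field_simp
    linarith
  -- min mass
  set w : X → ℝ := fun x => min (p x) (q x) with hw
  have hwm : Measurable w := hpm.min hqm
  have hw0 : ∀ x, 0 ≤ w x := fun x => le_min (hp0 x) (hq0 x)
  have hw_eq : ∀ᵐ x ∂μ, w x = 1/2 - u x := by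
    filter_upwards [hpq1] with x e
    have hq' : q x = 1 - p x := by linarith
    rcases le_total (p x) (1/2) with h | h
    · have h1 : w x = p x := min_eq_left (by rw [hq']; linarith)
      have h2 : u x = 1/2 - p x := by
        rw [hu]; simp only []; rw [abs_of_nonpos (by linarith)]; ring
      rw [h1, h2]; ring
    · have h1 : w x = q x := min_eq_right (by rw [hq']; linarith)
      have h2 : u x = p x - 1/2 := by
        rw [hu]; simp only []; rw [abs_of_nonneg (by linarith)]
      rw [h1, h2, hq']; ring
  have hintw : Integrable w μ := by
    refine hint w 1 hwm ?_
    filter_upwards [hpq1] with x e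
    rw [Real.norm_eq_abs, abs_of_nonneg (hw0 x)]
    calc w x ≤ p x := min_le_left _ _
    _ ≤ 1 := by linarith [hq0 x]
  have hmw : 1 - c ≤ ∫ x, w x ∂μ := by
    have : ∫ x, w x ∂μ = ∫ x, (1/2 - u x) ∂μ := integral_congr_ae hw_eq
    rw [this, integral_sub (integrable_const _) hintu, integral_const, measureReal_def, hμuniv'] at *
    simp only [smul_eq_mul] at this ⊢
    linarith
  -- pass from P,Q to w-weighted integrals
  have hne : Nonempty X := by
    by_contra h
    rw [not_nonempty_iff] at h
    have h0 : μ Set.univ = 0 := by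
      rw [Set.univ_eq_empty_iff.mpr h]; exact measure_empty
    rw [hμuniv] at h0
    simp at h0
  have hM0 : 0 ≤ M := le_trans (hψ₁0 Classical.ofNonempty) (hψ₁M _)
  have hp1 : ∀ᵐ x ∂μ, p x ≤ 1 := by
    filter_upwards [hpq1] with x e; linarith [hq0 x]
  have hq1 : ∀ᵐ x ∂μ, q x ≤ 1 := by
    filter_upwards [hpq1] with x e; linarith [hp0 x]
  have hPψ : ∫ x, ψ₁ x ∂P = ∫ x, p x * ψ₁ x ∂μ := by
    have := (integral_rnDeriv_smul (f := ψ₁) hPμ).symm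
    simpa only [smul_eq_mul] using this
  have hQψ : ∫ x, ψ₂ x ∂Q = ∫ x, q x * ψ₂ x ∂μ := by
    have := (integral_rnDeriv_smul (f := ψ₂) hQμ).symm
    simpa only [smul_eq_mul] using this
  have bd : ∀ (r ψ : X → ℝ), Measurable r → Measurable ψ → (∀ x, 0 ≤ r x) → (∀ x, 0 ≤ ψ x) →
      (∀ x, ψ x ≤ M) → (∀ᵐ x ∂μ, r x ≤ 1) → Integrable (fun x => r x * ψ x) μ := by
    intro r ψ hrm hψm hr0 hψ0 hψM hr1
    refine hint _ M (hrm.mul hψm) ?_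
    filter_upwards [hr1] with x e
    rw [Real.norm_eq_abs, abs_of_nonneg (mul_nonneg (hr0 x) (hψ0 x))]
    calc r x * ψ x ≤ 1 * ψ x := mul_le_mul_of_nonneg_right e (hψ0 x)
    _ = ψ x := one_mul _
    _ ≤ M := hψM x
  have hintp1 : Integrable (fun x => p x * ψ₁ x) μ := bd p ψ₁ hpm hψ₁ hp0 hψ₁0 hψ₁M hp1
  have hintq2 : Integrable (fun x => q x * ψ₂ x) μ := bd q ψ₂ hqm hψ₂ hq0 hψ₂0 hψ₂M hq1
  have hw1 : ∀ᵐ x ∂μ, w x ≤ 1 := by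
    filter_upwards [hp1] with x e; exact le_trans (min_le_left _ _) e
  have hintw1 : Integrable (fun x => w x * ψ₁ x) μ := bd w ψ₁ hwm hψ₁ hw0 hψ₁0 hψ₁M hw1
  have hintw2 : Integrable (fun x => w x * ψ₂ x) μ := bd w ψ₂ hwm hψ₂ hw0 hψ₂0 hψ₂M hw1
  have hmono1 : ∫ x, w x * ψ₁ x ∂μ ≤ ∫ x, p x * ψ₁ x ∂μ := by
    apply integral_mono_ae hintw1 hintp1
    filter_upwards with x
    exact mul_le_mul_of_nonneg_right (min_le_left _ _) (hψ₁0 x)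
  have hmono2 : ∫ x, w x * ψ₂ x ∂μ ≤ ∫ x, q x * ψ₂ x ∂μ := by
    apply integral_mono_ae hintw2 hintq2
    filter_upwards with x
    exact mul_le_mul_of_nonneg_right (min_le_right _ _) (hψ₂0 x)
  have hdw : ∫ x, d * w x ∂μ ≤ ∫ x, (w x * ψ₁ x + w x * ψ₂ x) ∂μ := by
    apply integral_mono_ae (hintw.const_mul d) (hintw1.add hintw2)
    filter_upwards with x
    have h1 : d * w x ≤ (ψ₁ x + ψ₂ x) * w x := mul_le_mul_of_nonneg_right (hd x) (hw0 x)
    show d * w x ≤ w x * ψ₁ x + w x * ψ₂ x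
    nlinarith [h1]
  have hdwval : ∫ x, d * w x ∂μ = d * ∫ x, w x ∂μ := integral_const_mul d w
  have hfinal : (1 - c) * d ≤ d * ∫ x, w x ∂μ := by
    rw [mul_comm]
    exact mul_le_mul_of_nonneg_left hmw hd0
  have hsplit : ∫ x, (w x * ψ₁ x + w x * ψ₂ x) ∂μ = (∫ x, w x * ψ₁ x ∂μ) + ∫ x, w x * ψ₂ x ∂μ :=
    integral_add hintw1 hintw2
  rw [hPψ, hQψ]
  calc (1 - c) * d ≤ d * ∫ x, w x ∂μ := hfinal
  _ = ∫ x, d * w x ∂μ := hdwval.symm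
  _ ≤ ∫ x, (w x * ψ₁ x + w x * ψ₂ x) ∂μ := hdw
  _ = (∫ x, w x * ψ₁ x ∂μ) + ∫ x, w x * ψ₂ x ∂μ := hsplit
  _ ≤ (∫ x, p x * ψ₁ x ∂μ) + ∫ x, q x * ψ₂ x ∂μ := add_le_add hmono1 hmono2
  


open MeasureTheory in
set_option maxHeartbeats 1000000 in
private theorem main
    (T : ℕ) (hT : 1 ≤ T)
    (α : ℝ) (hα : α ∈ Set.Ico (0 : ℝ) 1)
    (H : ℝ → Type*) [∀ g, MeasurableSpace (H g)]
    (P₁ P₂ : ∀ g : ℝ, Measure (H g))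
    (hP₁ : ∀ g, IsProbabilityMeasure (P₁ g)) (hP₂ : ∀ g, IsProbabilityMeasure (P₂ g))
    (N₁ : ∀ g : ℝ, H g → ℕ) (hN₁ : ∀ g, Measurable (N₁ g))
    (hN₁T : ∀ g h, N₁ g h ≤ T)
    (hHell : ∀ g : ℝ, 0 < g → (1 - ∫ x, Real.sqrt (((P₁ g).rnDeriv (P₁ g + P₂ g) x).toReal * ((P₂ g).rnDeriv (P₁ g + P₂ g) x).toReal) ∂(P₁ g + P₂ g)) ≤ g ^ 2 * T / 2)
    (K : ℝ) (hK : K = (if α ≤ 1 / 3 then 2 / (27 * (1 - α)) else Real.sqrt α / (3 * Real.sqrt 3)) * Real.sqrt T) :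
    ((K : ℝ) : EReal) ≤
      ⨆ g : {g : ℝ // 0 < g},
        ((⨅ t : ℝ, t + (1 / (1 - α)) *
            ((1 / 2) * (∫ h, max (g.1 * ((T : ℝ) - (N₁ g.1 h : ℝ)) - t) 0 ∂(P₁ g.1))
              + (1 / 2) * (∫ h, max (g.1 * (N₁ g.1 h : ℝ) - t) 0 ∂(P₂ g.1))) : ℝ) : EReal) := by
  obtain ⟨hα0, hα1⟩ := hα
  have h1α : 0 < 1 - α := by linarith
  set s : ℝ := Real.sqrt T with hs
  have hT1 : (1:ℝ) ≤ (T:ℝ) := by exact_mod_cast hT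
  have hs1 : 1 ≤ s := by
    rw [hs, show (1:ℝ) = Real.sqrt 1 by simp]
    exact Real.sqrt_le_sqrt hT1
  have hs0 : 0 < s := lt_of_lt_of_le one_pos hs1
  have hsq : s ^ 2 = (T:ℝ) := Real.sq_sqrt (by linarith)
  set c : ℝ := if α ≤ 1/3 then 1/2 else α with hc
  have hc0 : 0 < c := by
    rw [hc]; split_ifs with h
    · norm_num
    · linarith [not_le.mp h]
  have hc1 : c < 1 := by
    rw [hc]; split_ifs with h
    · norm_num
    · exact hα1
  set g : ℝ := c / s with hg
  have hg0 : 0 < g := div_pos hc0 hs0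
  have hgT : g * (T:ℝ) = c * s := by
    rw [hg, ← hsq]; field_simp
  have hg2T : g ^ 2 * (T:ℝ) / 2 = c ^ 2 / 2 := by
    rw [hg, ← hsq]; field_simp
  haveI := hP₁ g; haveI := hP₂ g
  have hHg : (1 - ∫ x, Real.sqrt (((P₁ g).rnDeriv (P₁ g + P₂ g) x).toReal * ((P₂ g).rnDeriv (P₁ g + P₂ g) x).toReal) ∂(P₁ g + P₂ g)) ≤ c ^ 2 / 2 := by
    rw [← hg2T]; exact hHell g hg0
  refine le_trans ?_ (le_iSup _ (⟨g, hg0⟩ : {g : ℝ // 0 < g}))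
  rw [EReal.coe_le_coe_iff]
  apply le_ciInf
  intro t
  -- the two reward functions
  set R₁ : H g → ℝ := fun h => g * ((T : ℝ) - (N₁ g h : ℝ)) with hR₁
  set R₂ : H g → ℝ := fun h => g * (N₁ g h : ℝ) with hR₂
  have hNm : Measurable (fun h => ((N₁ g h : ℕ) : ℝ)) := measurable_from_nat.comp (hN₁ g)
  have hR₁m : Measurable R₁ := measurable_const.mul (measurable_const.sub hNm)
  have hR₂m : Measurable R₂ := measurable_const.mul hNm
  have hNle : ∀ h, (N₁ g h : ℝ) ≤ (T:ℝ) := fun h => by exact_mod_cast hN₁T g h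
  have hN0 : ∀ h, (0:ℝ) ≤ (N₁ g h : ℝ) := fun h => Nat.cast_nonneg _
  have hR₁0 : ∀ h, 0 ≤ R₁ h := fun h => mul_nonneg hg0.le (by linarith [hNle h])
  have hR₂0 : ∀ h, 0 ≤ R₂ h := fun h => mul_nonneg hg0.le (hN0 h)
  have hR₁B : ∀ h, R₁ h ≤ c * s := fun h => by
    rw [hR₁]; simp only []
    calc g * ((T:ℝ) - (N₁ g h : ℝ)) ≤ g * (T:ℝ) :=
      mul_le_mul_of_nonneg_left (by linarith [hN0 h]) hg0.le
    _ = c * s := hgT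
  have hR₂B : ∀ h, R₂ h ≤ c * s := fun h => by
    rw [hR₂]; simp only []
    calc g * (N₁ g h : ℝ) ≤ g * (T:ℝ) := mul_le_mul_of_nonneg_left (hNle h) hg0.le
    _ = c * s := hgT
  have hRsum : ∀ h, R₁ h + R₂ h = c * s := fun h => by
    rw [hR₁, hR₂]; simp only []; rw [← hgT]; ring
  set I₁ : ℝ := ∫ h, max (R₁ h - t) 0 ∂(P₁ g) with hI₁
  set I₂ : ℝ := ∫ h, max (R₂ h - t) 0 ∂(P₂ g) with hI₂
  have hI₁0 : 0 ≤ I₁ := integral_nonneg (fun h => le_max_right _ _)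
  have hI₂0 : 0 ≤ I₂ := integral_nonneg (fun h => le_max_right _ _)
  have hr1 : 1 ≤ 1 / (1 - α) := by
    rw [le_div_iff₀ h1α]; linarith
  have hr0 : 0 < 1 / (1 - α) := by positivity
  show K ≤ t + 1 / (1 - α) * (1 / 2 * I₁ + 1 / 2 * I₂)
  by_cases hcase : α ≤ 1/3
  · -- α ≤ 1/3, c = 1/2
    have hcv : c = 1/2 := if_pos hcase
    have hKval : K = 2 / (27 * (1 - α)) * s := by rw [hK, if_pos hcase]
    have hKs : K ≤ s / 8 := by
      rw [hKval]
      have h8 : 2 / (27 * (1 - α)) ≤ 1/8 := by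
        rw [div_le_div_iff₀ (by linarith) (by norm_num)]
        linarith
      calc 2 / (27 * (1 - α)) * s ≤ 1/8 * s := mul_le_mul_of_nonneg_right h8 hs0.le
      _ = s / 8 := by ring
    rcases le_total t (s/8) with ht | ht
    · -- use expectations
      have hcore := core (P₁ g) (P₂ g) _ rfl c hc0 hHg R₁ R₂ hR₁m hR₂m (c*s)
        hR₁0 hR₂0 hR₁B hR₂B (c*s) (by positivity) (fun h => (hRsum h).ge)
      have hintR₁ : Integrable R₁ (P₁ g) :=
        Integrable.mono' (integrable_const (c*s)) hR₁m.aestronglyMeasurable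
          (Filter.Eventually.of_forall fun h => by
            rw [Real.norm_eq_abs, abs_of_nonneg (hR₁0 h)]; exact hR₁B h)
      have hintR₂ : Integrable R₂ (P₂ g) :=
        Integrable.mono' (integrable_const (c*s)) hR₂m.aestronglyMeasurable
          (Filter.Eventually.of_forall fun h => by
            rw [Real.norm_eq_abs, abs_of_nonneg (hR₂0 h)]; exact hR₂B h)
      have hIlow : ∀ (R : H g → ℝ) (P : Measure (H g)) [IsProbabilityMeasure P],
          Integrable R P → (∫ h, R h ∂P) - t ≤ ∫ h, max (R h - t) 0 ∂P := by
        intro R P hPp hintR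
        have h1 : ∫ h, (R h - t) ∂P ≤ ∫ h, max (R h - t) 0 ∂P := by
          apply integral_mono_ae (hintR.sub (integrable_const t))
            (hintR.sub (integrable_const t)).pos_part
          filter_upwards with h
          exact le_max_left _ _
        rwa [integral_sub hintR (integrable_const t), integral_const, probReal_univ,
          one_smul] at h1
      have h1 := hIlow R₁ (P₁ g) hintR₁
      have h2 := hIlow R₂ (P₂ g) hintR₂
      -- hcore : (1-c)*(c*s) ≤ ∫R₁ + ∫R₂ = s/4 with c = 1/2
      have hsum : s/4 ≤ (∫ h, R₁ h ∂(P₁ g)) + ∫ h, R₂ h ∂(P₂ g) := by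
        have : (1 - c) * (c * s) = s/4 := by rw [hcv]; ring
        linarith [this ▸ hcore]
      have hX : s/8 - t ≤ 1/2 * I₁ + 1/2 * I₂ := by linarith
      have hX0 : (0:ℝ) ≤ s/8 - t := by linarith
      have hmul : s/8 - t ≤ 1 / (1 - α) * (1/2 * I₁ + 1/2 * I₂) := by
        calc s/8 - t ≤ 1/2 * I₁ + 1/2 * I₂ := hX
        _ ≤ 1 / (1 - α) * (1/2 * I₁ + 1/2 * I₂) :=
          le_mul_of_one_le_left (by linarith) hr1
      linarith
    · -- t large
      have : 0 ≤ 1 / (1 - α) * (1/2 * I₁ + 1/2 * I₂) := by positivity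
      linarith
  · -- α > 1/3, c = α
    have hα3 : 1/3 < α := not_le.mp hcase
    have hcv : c = α := if_neg hcase
    have hKval : K = Real.sqrt α / (3 * Real.sqrt 3) * s := by rw [hK, if_neg hcase]
    have hKs : K ≤ α * s / 2 := by
      rw [hKval]
      have ha2 : Real.sqrt α ^ 2 = α := Real.sq_sqrt (by linarith)
      have hb2 : Real.sqrt 3 ^ 2 = 3 := Real.sq_sqrt (by norm_num)
      have ha0 : 0 ≤ Real.sqrt α := Real.sqrt_nonneg _
      have hb0 : 0 ≤ Real.sqrt 3 := Real.sqrt_nonneg _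
      have hb0' : 0 < Real.sqrt 3 := by nlinarith
      have hab : 1 ≤ Real.sqrt α * Real.sqrt 3 := by
        nlinarith [sq_nonneg (Real.sqrt α * Real.sqrt 3 - 1), sq_nonneg (Real.sqrt α * Real.sqrt 3 + 1)]
      have hmain : Real.sqrt α / (3 * Real.sqrt 3) ≤ α / 2 := by
        rw [div_le_div_iff₀ (by positivity) (by norm_num)]
        nlinarith [mul_le_mul_of_nonneg_left hab ha0]
      calc Real.sqrt α / (3 * Real.sqrt 3) * s ≤ α / 2 * s :=
        mul_le_mul_of_nonneg_right hmain hs0.le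
      _ = α * s / 2 := by ring
    rcases le_total t (α * s / 2) with ht | ht
    · have hcore := core (P₁ g) (P₂ g) _ rfl c hc0 hHg
        (fun h => max (R₁ h - t) 0) (fun h => max (R₂ h - t) 0)
        ((hR₁m.sub measurable_const).max measurable_const)
        ((hR₂m.sub measurable_const).max measurable_const)
        (c * s + |t|)
        (fun h => le_max_right _ _) (fun h => le_max_right _ _)
        (fun h => max_le (by linarith [hR₁B h, neg_abs_le t]) (by positivity))
        (fun h => max_le (by linarith [hR₂B h, neg_abs_le t]) (by positivity))
        (c * s - 2 * t) (by rw [hcv]; linarith)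
        (fun h => by
          have := hRsum h
          have l1 : R₁ h - t ≤ max (R₁ h - t) 0 := le_max_left _ _
          have l2 : R₂ h - t ≤ max (R₂ h - t) 0 := le_max_left _ _
          linarith)
      -- hcore : (1-α)*(α*s - 2t) ≤ I₁ + I₂
      rw [hcv] at hcore
      have hXX : (1 - α) * (α * s - 2 * t) / 2 ≤ 1/2 * I₁ + 1/2 * I₂ := by linarith
      have heq : 1 / (1 - α) * ((1 - α) * (α * s - 2 * t) / 2) = (α * s - 2 * t) / 2 := by
        field_simp
      have hmul : 1 / (1 - α) * ((1 - α) * (α * s - 2 * t) / 2)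
          ≤ 1 / (1 - α) * (1/2 * I₁ + 1/2 * I₂) :=
        mul_le_mul_of_nonneg_left hXX hr0.le
      rw [heq] at hmul
      linarith
    · have : 0 ≤ 1 / (1 - α) * (1/2 * I₁ + 1/2 * I₂) := by positivity
      linarith


theorem two_armed_gaussian_bandit_worst_case_cvar
    (T : ℕ) (hT : 1 ≤ T)
    (α : ℝ) (hα : α ∈ Set.Ico (0 : ℝ) 1)
    (H : ℝ → Type*) [∀ g, MeasurableSpace (H g)]
    (P₁ P₂ : ∀ g : ℝ, Measure (H g))
    (hP₁ : ∀ g, IsProbabilityMeasure (P₁ g)) (hP₂ : ∀ g, IsProbabilityMeasure (P₂ g))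
    (N₁ : ∀ g : ℝ, H g → ℕ) (hN₁ : ∀ g, Measurable (N₁ g))
    (hN₁T : ∀ g h, N₁ g h ≤ T)
    (hHell : ∀ g : ℝ, 0 < g → sqHellinger (P₁ g) (P₂ g) ≤ g ^ 2 * T / 2) :
    ((cAlpha α * Real.sqrt T : ℝ) : EReal) ≤
      ⨆ g : {g : ℝ // 0 < g},
        ((⨅ t : ℝ, t + (1 / (1 - α)) *
            ((1 / 2) * (∫ h, max (g.1 * ((T : ℝ) - (N₁ g.1 h : ℝ)) - t) 0 ∂(P₁ g.1))
              + (1 / 2) * (∫ h, max (g.1 * (N₁ g.1 h : ℝ) - t) 0 ∂(P₂ g.1))) : ℝ) : EReal) := by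
  exact main T hT α hα H P₁ P₂ hP₁ hP₂ N₁ hN₁ hN₁T
    (fun g hg => hHell g hg) (cAlpha α * Real.sqrt T) (by rw [cAlpha])
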